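/- If 𝔪_t = Σ_{i≥0} t^i m_i is a formal one-parameter deformation of a hom-Lie-Rinehart structure 𝔪 (so m_0 = 𝔪 and [[𝔪_t, 𝔪_t]] = 0), then the first-order term m_1 (the infinitesimal) is a 2-cocycle: δ(m_1) = [𝔪, m_1] = 0. More generally, if m_i = 0 for 1 ≤ i ≤ n−1 and m_n ≠ 0, then m_n is a 2-cocycle. -/
import Mathlib


open scoped BigOperators

section Framework

variable (R : Type*) [CommRing R] (A : Type*) [CommRing A] [Algebra R A]
variable (M : Type*) [AddCommGroup M] [Module R M] [Module A M] [IsScalarTower R A M]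

/-- A `(φ,β)`-multiderivation of degree `n` of the `A`-module `M`, with symbol `σ`. -/
structure IsMultiDer (φ : A →ₐ[R] A) (β : M → M) (n : ℕ)
    (D : (Fin (n + 1) → M) → M) (σ : (Fin n → M) → A → A) : Prop where
  D_add : ∀ (x : Fin (n + 1) → M) (i : Fin (n + 1)) (u v : M),
    D (Function.update x i (u + v)) = D (Function.update x i u) + D (Function.update x i v)
  D_smul : ∀ (x : Fin (n + 1) → M) (i : Fin (n + 1)) (r : R) (u : M),
    D (Function.update x i (r • u)) = r • D (Function.update x i u)
  D_alt : ∀ (x : Fin (n + 1) → M) (i j : Fin (n + 1)), i ≠ j → x i = x j → D x = 0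
  σ_add : ∀ (x : Fin n → M) (i : Fin n) (u v : M),
    σ (Function.update x i (u + v)) = σ (Function.update x i u) + σ (Function.update x i v)
  σ_smul : ∀ (x : Fin n → M) (i : Fin n) (r : R) (u : M),
    σ (Function.update x i (r • u)) = r • σ (Function.update x i u)
  σ_alt : ∀ (x : Fin n → M) (i j : Fin n), i ≠ j → x i = x j → σ x = 0
  σ_linear : ∀ x : Fin n → M, IsLinearMap R (σ x)
  σ_der : ∀ (x : Fin n → M) (a b : A),
    σ x (a * b) = (⇑φ)^[n] a * σ x b + (⇑φ)^[n] b * σ x a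
  D_beta : ∀ x : Fin (n + 1) → M, D (fun i => β (x i)) = β (D x)
  σ_beta : ∀ (x : Fin n → M) (a : A), σ (fun i => β (x i)) (φ a) = φ (σ x a)
  σ_A : ∀ (x : Fin n → M) (i : Fin n) (a : A),
    σ (Function.update x i (a • x i)) = fun b => (⇑φ)^[n] a * σ x b
  D_leibniz : ∀ (x : Fin (n + 1) → M) (a : A),
    D (Function.update x (Fin.last n) (a • x (Fin.last n)))
      = (⇑φ)^[n] a • D x + σ (fun i : Fin n => x i.castSucc) a • (β^[n] (x (Fin.last n)))

variable {M}

/-- `(q+1,p)`-shuffles: permutations strictly increasing on the first `k` positions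
and on the remaining ones. -/
def IsShuffle (k : ℕ) {n : ℕ} (τ : Equiv.Perm (Fin n)) : Prop :=
  (∀ i j : Fin n, i < j → (j : ℕ) < k → τ i < τ j) ∧
  (∀ i j : Fin n, i < j → k ≤ (i : ℕ) → τ i < τ j)

instance (k n : ℕ) : DecidablePred (fun τ : Equiv.Perm (Fin n) => IsShuffle k τ) := fun τ =>
  inferInstanceAs (Decidable (_ ∧ _))

/-- Shuffle composition `D₁ ∘ D₂` of multiderivations of degrees `p` and `q`. -/
def compFun (β : M → M) (p q : ℕ) (D1 : (Fin (p + 1) → M) → M) (D2 : (Fin (q + 1) → M) → M)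
    (x : Fin (p + q + 1) → M) : M :=
  ∑ τ ∈ Finset.univ.filter (fun τ : Equiv.Perm (Fin (p + q + 1)) => IsShuffle (q + 1) τ),
    (Equiv.Perm.sign τ : ℤ) •
      D1 (Fin.cons (D2 (fun i : Fin (q + 1) => x (τ (Fin.castLE (by omega) i))))
        (fun j : Fin p => β^[q] (x (τ (Fin.cast (by omega) (Fin.natAdd (q + 1) j))))))

/-- The graded Lie bracket `[D₁,D₂] = (-1)^{pq} D₁∘D₂ - D₂∘D₁`. -/
def bracketFun (β : M → M) (p q : ℕ) (D1 : (Fin (p + 1) → M) → M)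
    (D2 : (Fin (q + 1) → M) → M) (x : Fin (p + q + 1) → M) : M :=
  ((-1 : ℤ)) ^ (p * q) • compFun β p q D1 D2 x -
    compFun β q p D2 D1 (fun i => x (Fin.cast (by omega) i))

variable {A}

/-- The operation `σ₁ ⊙ D₂` on symbols. -/
def odotFun (φ : A → A) (β : M → M) :
    (p : ℕ) → (q : ℕ) → ((Fin p → M) → A → A) → ((Fin (q + 1) → M) → M) →
      (Fin (p + q) → M) → A → A
  | 0, _, _, _, _, _ => 0
  | (p' + 1), q, σ1, D2, x, a =>
    ∑ τ ∈ Finset.univ.filter (fun τ : Equiv.Perm (Fin (p' + 1 + q)) => IsShuffle (q + 1) τ),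
      (Equiv.Perm.sign τ : ℤ) •
        σ1 (Fin.cons (D2 (fun i : Fin (q + 1) => x (τ (Fin.castLE (by omega) i))))
            (fun j : Fin p' => β^[q] (x (τ (Fin.cast (by omega) (Fin.natAdd (q + 1) j))))))
          (φ^[q] a)

/-- The bracket `{σ₁, σ₂}` of symbols. -/
def symBrFun (β : M → M) (p q : ℕ) (σ1 : (Fin p → M) → A → A) (σ2 : (Fin q → M) → A → A)
    (x : Fin (p + q) → M) (a : A) : A :=
  ∑ τ ∈ Finset.univ.filter (fun τ : Equiv.Perm (Fin (p + q)) => IsShuffle p τ),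
    (Equiv.Perm.sign τ : ℤ) •
      (σ1 (fun i : Fin p => β^[q] (x (τ (Fin.castLE (by omega) i))))
          (σ2 (fun j : Fin q => x (τ (Fin.cast (by omega) (Fin.natAdd p j)))) a)
        - σ2 (fun j : Fin q => β^[p] (x (τ (Fin.cast (by omega) (Fin.natAdd p j)))))
          (σ1 (fun i : Fin p => x (τ (Fin.castLE (by omega) i))) a))

end Framework

lemma shuffle3 : Finset.univ.filter (fun τ : Equiv.Perm (Fin 3) => IsShuffle 2 τ)
    = {Equiv.refl (Fin 3), Equiv.swap 1 2, finRotate 3} := by decide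

lemma compFun_11 {M : Type*} [AddCommGroup M] (β : M → M) (D1 D2 : (Fin 2 → M) → M)
    (x : Fin 3 → M) :
    compFun β 1 1 D1 D2 x =
      D1 ![D2 ![x 0, x 1], β (x 2)] - D1 ![D2 ![x 0, x 2], β (x 1)]
        + D1 ![D2 ![x 1, x 2], β (x 0)] := by
  rw [compFun, shuffle3]
  rw [Finset.sum_insert (by decide), Finset.sum_insert (by decide), Finset.sum_singleton]
  have e1 : ∀ (a : M) (f : Fin 1 → M), Fin.cons a f = ![a, f 0] := by
    intro a f; funext i; fin_cases i <;> rfl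
  simp only [e1]
  have c1 : (fun i : Fin 2 => x ((Equiv.refl (Fin 3)) (Fin.castLE (by omega) i))) = ![x 0, x 1] := by
    funext i; fin_cases i <;> rfl
  have c2 : (fun i : Fin 2 => x ((Equiv.swap (1:Fin 3) 2) (Fin.castLE (by omega) i))) = ![x 0, x 2] := by
    funext i; fin_cases i <;> rfl
  have c3 : (fun i : Fin 2 => x ((finRotate 3) (Fin.castLE (by omega) i))) = ![x 1, x 2] := by
    funext i; fin_cases i <;> rfl
  have v1 : x ((Equiv.refl (Fin 3)) (Fin.cast (by omega) (Fin.natAdd (1 + 1) (0 : Fin 1)))) = x 2 := rfl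
  have v2 : x ((Equiv.swap (1:Fin 3) 2) (Fin.cast (by omega) (Fin.natAdd (1 + 1) (0 : Fin 1)))) = x 1 := rfl
  have v3 : x ((finRotate 3) (Fin.cast (by omega) (Fin.natAdd (1 + 1) (0 : Fin 1)))) = x 0 := rfl
  rw [c1, c2, c3, v1, v2, v3]
  simp only [Function.iterate_one, Equiv.Perm.sign_refl, Equiv.Perm.sign_swap (by decide : (1:Fin 3) ≠ 2)]
  rw [show Equiv.Perm.sign (finRotate 3) = 1 from by decide]
  push_cast
  rw [one_smul, one_smul, neg_one_smul]
  abel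

section Lemmas
variable {R : Type*} [CommRing R] {A : Type*} [CommRing A] [Algebra R A]
variable {M : Type*} [AddCommGroup M] [Module R M] [Module A M] [IsScalarTower R A M]
variable {φ : A →ₐ[R] A} {β : M → M} {D : (Fin 2 → M) → M} {σ : (Fin 1 → M) → A → A}

lemma upd0 (a b c : M) : Function.update ![a, b] (0 : Fin 2) c = ![c, b] := by
  funext i; fin_cases i <;> simp

lemma upd1 (a b c : M) : Function.update ![a, b] (1 : Fin 2) c = ![a, c] := by
  funext i; fin_cases i <;> simp

lemma D_add2 (h : IsMultiDer R A M φ β 1 D σ) (a u v : M) :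
    D ![a, u + v] = D ![a, u] + D ![a, v] := by
  have := h.D_add ![a, u] 1 u v
  rwa [upd1, upd1, upd1] at this

lemma D_add1 (h : IsMultiDer R A M φ β 1 D σ) (a u v : M) :
    D ![u + v, a] = D ![u, a] + D ![v, a] := by
  have := h.D_add ![u, a] 0 u v
  rwa [upd0, upd0, upd0] at this

lemma D_antisymm (h : IsMultiDer R A M φ β 1 D σ) (u v : M) :
    D ![u, v] = - D ![v, u] := by
  have h0 : D ![u + v, u + v] = 0 := h.D_alt ![u + v, u + v] 0 1 (by decide) rfl
  have huu : D ![u, u] = 0 := h.D_alt ![u, u] 0 1 (by decide) rfl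
  have hvv : D ![v, v] = 0 := h.D_alt ![v, v] 0 1 (by decide) rfl
  rw [D_add1 h, D_add2 h, D_add2 h, huu, hvv, zero_add, add_zero] at h0
  exact eq_neg_of_add_eq_zero_left h0

lemma D_zero2 (h : IsMultiDer R A M φ β 1 D σ) (a : M) : D ![a, 0] = 0 := by
  have := h.D_smul ![a, (0:M)] 1 (0 : R) 0
  rwa [zero_smul, zero_smul, upd1] at this

lemma D_neg2 (h : IsMultiDer R A M φ β 1 D σ) (a u : M) : D ![a, -u] = - D ![a, u] := by
  have h0 : D ![a, u + -u] = D ![a, u] + D ![a, -u] := D_add2 h a u (-u)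
  rw [add_neg_cancel, D_zero2 h] at h0
  exact eq_neg_of_add_eq_zero_right h0.symm

end Lemmas

theorem infinitesimal_is_two_cocycle
    (R : Type*) [CommRing R] (A : Type*) [CommRing A] [Algebra R A]
    (L : Type*) [AddCommGroup L] [Module R L] [Module A L] [IsScalarTower R A L]
    (φ : A →ₐ[R] A) (α : L → L)
    (m : ℕ → (Fin 2 → L) → L) (σs : ℕ → (Fin 1 → L) → A → A)
    (hmd : ∀ i, IsMultiDer R A L φ α 1 (m i) (σs i))
    (hdef : ∀ (n : ℕ) (x y z : L),
      ∑ i ∈ Finset.range (n + 1),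
        (m i ![α x, m (n - i) ![y, z]] + m i ![α y, m (n - i) ![z, x]]
          + m i ![α z, m (n - i) ![x, y]]) = 0) :
    ∀ n : ℕ, 1 ≤ n → (∀ i, 1 ≤ i → i < n → m i = 0) →
      ∀ x : Fin 3 → L, bracketFun α 1 1 (m 0) (m n) x = 0 := by
  intro n hn hz x
  -- Jacobi identity with only the i = 0 and i = n terms surviving
  have hJ := hdef n (x 0) (x 1) (x 2)
  set F : ℕ → L := fun i =>
      m i ![α (x 0), m (n - i) ![x 1, x 2]] + m i ![α (x 1), m (n - i) ![x 2, x 0]]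
        + m i ![α (x 2), m (n - i) ![x 0, x 1]] with hF
  have hsub : ({0, n} : Finset ℕ) ⊆ Finset.range (n + 1) := by
    intro i hi
    simp only [Finset.mem_insert, Finset.mem_singleton] at hi
    simp only [Finset.mem_range]
    omega
  have hzero : ∀ i ∈ Finset.range (n + 1), i ∉ ({0, n} : Finset ℕ) → F i = 0 := by
    intro i hi hni
    simp only [Finset.mem_insert, Finset.mem_singleton, not_or] at hni
    simp only [Finset.mem_range] at hi
    have hmi : m i = 0 := hz i (by omega) (by omega)
    simp [hF, hmi]
  have hsum : ∑ i ∈ Finset.range (n + 1), F i = F 0 + F n := by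
    rw [← Finset.sum_subset hsub hzero, Finset.sum_pair (by omega : (0:ℕ) ≠ n)]
  rw [hsum] at hJ
  simp only [hF, Nat.sub_zero, Nat.sub_self] at hJ
  -- Compute the bracket
  rw [bracketFun]
  rw [show (fun i : Fin 3 => x (Fin.cast (by omega : 1 + 1 + 1 = 1 + 1 + 1) i)) = x from rfl]
  rw [compFun_11, compFun_11]
  have h0 := hmd 0
  have hn' := hmd n
  rw [D_antisymm h0 (m n ![x 0, x 1]) (α (x 2)),
      D_antisymm h0 (m n ![x 0, x 2]) (α (x 1)),
      D_antisymm h0 (m n ![x 1, x 2]) (α (x 0)),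
      D_antisymm hn' (m 0 ![x 0, x 1]) (α (x 2)),
      D_antisymm hn' (m 0 ![x 0, x 2]) (α (x 1)),
      D_antisymm hn' (m 0 ![x 1, x 2]) (α (x 0)),
      D_antisymm hn' (x 0) (x 2), D_antisymm h0 (x 0) (x 2),
      D_neg2 h0, D_neg2 hn']
  rw [mul_one, pow_one, neg_one_zsmul]
  rw [← hJ]
  abel
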